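/- Let N ≥ 2, r > 0, p ≥ r with p + (N-1)r = 1, and b^j defined as in the closed form b^j = ((N-1)/(Nr))·(1 - (j+1)(1-r)^j + j(1-r)^(j+1)) + (1/(Nr))·((p-r)^(j+1) - (j+1)(1-r)^j(p-r) + j(1-r)^(j+1)). Then the sequence (b^j)_{j≥1} is strictly increasing provided r < 1 and p < 1 (equivalently, monotone nondecreasing when p ≤ 1). -/
import Mathlib

theorem stmt5 (N : ℕ) (p r : ℝ) (hN : 2 ≤ N) (hr : 0 < r) (hr1 : r < 1)
    (hpr : r ≤ p) (hp1 : p < 1)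
    (hsum : p + (N - 1 : ℝ) * r = 1)
    (b : ℕ → ℝ)
    (hb : ∀ j : ℕ, b j =
      ((N - 1 : ℝ) / ((N : ℝ) * r)) *
        (1 - (j + 1 : ℝ) * (1 - r) ^ j + (j : ℝ) * (1 - r) ^ (j + 1)) +
      (1 / ((N : ℝ) * r)) *
        ((p - r) ^ (j + 1) - (j + 1 : ℝ) * (1 - r) ^ j * (p - r) +
          (j : ℝ) * (1 - r) ^ (j + 1))) :
    ∀ j : ℕ, 1 ≤ j → b j < b (j + 1) := by
  intro j _
  have hNval : (N:ℝ) = (1 - p + r) / r := by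
    field_simp
    linarith
  have hNr : (0:ℝ) < (N:ℝ) * r := by
    rw [hNval]; rw [div_mul_cancel₀ _ (ne_of_gt hr)]; linarith
  have hNrval : (N:ℝ) * r = 1 - p + r := by
    rw [hNval, div_mul_cancel₀ _ (ne_of_gt hr)]
  have key : b (j+1) - b j =
      ((1 - (p - r)) * ((1 - r)^(j+1) - (p - r)^(j+1))) / ((N:ℝ) * r) := by
    rw [hb (j+1), hb j, hNrval, hNval]
    have h1 : (1:ℝ) - p + r ≠ 0 := by linarith
    have h2 : r ≠ 0 := ne_of_gt hr
    field_simp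
    ring
  have hspos : (0:ℝ) ≤ p - r := by linarith
  have hlt : (p - r)^(j+1) < (1-r)^(j+1) :=
    pow_lt_pow_left₀ (by linarith) hspos (Nat.succ_ne_zero j)
  have : 0 < b (j+1) - b j := by
    rw [key]
    apply div_pos _ hNr
    apply mul_pos (by linarith) (by linarith)
  linarith
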